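/- The surface integral over the sphere of any Poisson bracket vanishes: for all polynomials f, g ∈ ℝ[X₁,X₂,X₃], ∫_{S²_s} {f,g} dσ = 0. -/

import Mathlib

open MvPolynomial MeasureTheory

noncomputable section

attribute [local instance] Classical.propDecidable

/-- The Poisson bracket on `ℝ[X₀,X₁,X₂]` associated to the sphere:
`{f,g} = Σ εᵢⱼₖ Xᵢ ∂f/∂Xⱼ ∂g/∂Xₖ` (indices `0,1,2` play the role of `1,2,3`). -/
def pb (f g : MvPolynomial (Fin 3) ℝ) : MvPolynomial (Fin 3) ℝ :=
  X 0 * (pderiv 1 f * pderiv 2 g - pderiv 2 f * pderiv 1 g) +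
  X 1 * (pderiv 2 f * pderiv 0 g - pderiv 0 f * pderiv 2 g) +
  X 2 * (pderiv 0 f * pderiv 1 g - pderiv 1 f * pderiv 0 g)

abbrev E3 := EuclideanSpace ℝ (Fin 3)

open Real

def rotFun (i j : Fin 3) (θ : ℝ) (x : E3) : E3 := WithLp.toLp 2 fun m =>
  if m = i then cos θ * x i - sin θ * x j
  else if m = j then sin θ * x i + cos θ * x j
  else x m

def rotLin (i j : Fin 3) (θ : ℝ) : E3 →ₗ[ℝ] E3 where
  toFun := rotFun i j θ
  map_add' x y := by
    ext m
    simp only [rotFun, PiLp.add_apply, PiLp.toLp_apply]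
    split_ifs <;> ring
  map_smul' c x := by
    ext m
    simp only [rotFun, PiLp.toLp_apply, PiLp.smul_apply, smul_eq_mul, RingHom.id_apply]
    split_ifs <;> ring

theorem rotLin_norm (i j : Fin 3) (hij : i ≠ j) (θ : ℝ) (x : E3) :
    ‖rotLin i j θ x‖ = ‖x‖ := by
  rw [EuclideanSpace.norm_eq, EuclideanSpace.norm_eq]
  congr 1
  show ∑ m : Fin 3, ‖rotFun i j θ x m‖ ^ 2 = _
  fin_cases i <;> fin_cases j <;> simp_all [rotFun, Fin.sum_univ_three, Real.norm_eq_abs,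
    sq_abs] <;>
    nlinarith [sin_sq_add_cos_sq θ, sq_nonneg (x 0), sq_nonneg (x 1), sq_nonneg (x 2)]

def rot (i j : Fin 3) (hij : i ≠ j) (θ : ℝ) : E3 ≃ₗᵢ[ℝ] E3 :=
  LinearIsometry.toLinearIsometryEquiv ⟨rotLin i j θ, rotLin_norm i j hij θ⟩ rfl

theorem rot_apply (i j : Fin 3) (hij : i ≠ j) (θ : ℝ) (x : E3) (m : Fin 3) :
    rot i j hij θ x m = rotFun i j θ x m := rfl

open MeasureTheory in
theorem LIE_map_hausdorff (e : E3 ≃ₗᵢ[ℝ] E3) :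
    Measure.map e (μH[2] : Measure E3) = μH[2] := by
  have := e.isometry.map_hausdorffMeasure (d := 2) (Or.inr e.surjective)
  rwa [Set.range_eq_univ.2 e.surjective, Measure.restrict_univ] at this

open MeasureTheory in
theorem rot_measurePreserving (i j : Fin 3) (hij : i ≠ j) (θ : ℝ) :
    Measure.map (rot i j hij θ) (μH[2] : Measure E3) = μH[2] :=
  LIE_map_hausdorff _

theorem rot_preimage_sphere (i j : Fin 3) (hij : i ≠ j) (θ : ℝ) (s : ℝ) :
    (rot i j hij θ) ⁻¹' (Metric.sphere (0 : E3) s) = Metric.sphere 0 s := by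
  ext x
  simp [Metric.mem_sphere, dist_zero_right, (rot i j hij θ).norm_map]

open MeasureTheory in
theorem setIntegral_comp_LIE (e : E3 ≃ₗᵢ[ℝ] E3) {S : Set E3} (hS : e ⁻¹' S = S)
    (f : E3 → ℝ) :
    ∫ x in S, f (e x) ∂(μH[2] : Measure E3) = ∫ x in S, f x ∂(μH[2] : Measure E3) := by
  conv_rhs => rw [← LIE_map_hausdorff e]
  rw [show (⇑e : E3 → E3) = ⇑(e.toHomeomorph.toMeasurableEquiv) from rfl,
    MeasureTheory.setIntegral_map_equiv]
  rw [show e.toHomeomorph.toMeasurableEquiv ⁻¹' S = S from hS]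

open MvPolynomial

def Lb (i j : Fin 3) (p : MvPolynomial (Fin 3) ℝ) : MvPolynomial (Fin 3) ℝ :=
  X i * pderiv j p - X j * pderiv i p

theorem hasDerivAt_rotFun_coord (i j : Fin 3) (hij : i ≠ j) (x : E3) (m : Fin 3) (θ : ℝ) :
    HasDerivAt (fun t => rotFun i j t x m)
      (eval (fun m' => rotFun i j θ x m') (Lb i j (X m))) θ := by
  classical
  have evj : rotFun i j θ x j = Real.sin θ * x i + Real.cos θ * x j := by
    simp [rotFun, if_neg (Ne.symm hij)]
  have evi : rotFun i j θ x i = Real.cos θ * x i - Real.sin θ * x j := by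
    simp [rotFun]
  by_cases hmi : m = i
  · rw [hmi]
    have h1 : Lb i j (X i) = -X j := by
      rw [Lb, pderiv_X_self, pderiv_X_of_ne hij]; ring
    rw [h1, map_neg, eval_X]
    have heq : (fun t => rotFun i j t x i) = fun t => Real.cos t * x i - Real.sin t * x j := by
      funext t; simp [rotFun]
    rw [heq, evj]
    have key : HasDerivAt (fun t => Real.cos t * x i - Real.sin t * x j)
        (-Real.sin θ * x i - Real.cos θ * x j) θ :=
      ((Real.hasDerivAt_cos θ).mul_const (x i)).sub ((Real.hasDerivAt_sin θ).mul_const (x j))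
    convert key using 1
    ring
  · by_cases hmj : m = j
    · rw [hmj]
      have h1 : Lb i j (X j) = X i := by
        rw [Lb, pderiv_X_self, pderiv_X_of_ne (Ne.symm hij)]; ring
      rw [h1, eval_X]
      have heq : (fun t => rotFun i j t x j) = fun t => Real.sin t * x i + Real.cos t * x j := by
        funext t; simp [rotFun, if_neg (Ne.symm hij)]
      rw [heq, evi]
      have key : HasDerivAt (fun t => Real.sin t * x i + Real.cos t * x j)
          (Real.cos θ * x i + -Real.sin θ * x j) θ :=
        ((Real.hasDerivAt_sin θ).mul_const (x i)).add ((Real.hasDerivAt_cos θ).mul_const (x j))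
      convert key using 1
      ring
    · have h1 : Lb i j (X m) = 0 := by
        rw [Lb, pderiv_X_of_ne hmj, pderiv_X_of_ne hmi]
        ring
      rw [h1, map_zero]
      have heq : (fun t => rotFun i j t x m) = fun _ => x m := by
        funext t; simp [rotFun, if_neg hmi, if_neg hmj]
      rw [heq]
      exact hasDerivAt_const θ (x m)

theorem hasDerivAt_eval_rotFun (i j : Fin 3) (hij : i ≠ j) (x : E3)
    (q : MvPolynomial (Fin 3) ℝ) (θ : ℝ) :
    HasDerivAt (fun t => eval (fun m => rotFun i j t x m) q)
      (eval (fun m => rotFun i j θ x m) (Lb i j q)) θ := by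
  induction q using MvPolynomial.induction_on with
  | C a =>
    have h1 : Lb i j (C a) = 0 := by simp [Lb]
    rw [h1]
    simpa using hasDerivAt_const θ a
  | add p q hp hq =>
    have h1 : Lb i j (p + q) = Lb i j p + Lb i j q := by
      simp [Lb]; ring
    rw [h1]
    simp only [map_add]; exact hp.add hq
  | mul_X p k hp =>
    have h1 : Lb i j (p * X k) = Lb i j p * X k + p * Lb i j (X k) := by
      simp [Lb, pderiv_mul]; ring
    have := hp.mul (hasDerivAt_rotFun_coord i j hij x k θ)
    simp only [map_mul, h1, map_add, eval_X]
    exact this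


/-- coordinate bound on Euclidean space -/
theorem abs_coord_le (x : E3) (k : Fin 3) : |x k| ≤ ‖x‖ := by
  rw [EuclideanSpace.norm_eq, ← Real.sqrt_sq_eq_abs]
  apply Real.sqrt_le_sqrt
  have : (x k) ^ 2 ≤ ∑ m : Fin 3, ‖x m‖ ^ 2 :=
    Finset.single_le_sum (f := fun m => ‖x m‖ ^ 2) (fun m _ => by positivity) (Finset.mem_univ k)
      |>.trans_eq' (by simp [Real.norm_eq_abs, sq_abs])
  simpa using this

/-- The affine embedding of a square face. -/
def psi (k : Fin 3) (c : ℝ) (y : Fin 2 → ℝ) : E3 := WithLp.toLp 2 fun m => Fin.insertNth (α := fun _ => ℝ) k c y m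

theorem psi_lip (k : Fin 3) (c : ℝ) : LipschitzWith 2 (psi k c) := by
  apply LipschitzWith.of_dist_le_mul
  intro y y'
  rw [EuclideanSpace.dist_eq]
  have h2 : ∀ m, dist (psi k c y m) (psi k c y' m) ^ 2
      = (Fin.insertNth (α := fun _ => ℝ) k c y m - Fin.insertNth (α := fun _ => ℝ) k c y' m) ^ 2 := by
    intro m; rw [Real.dist_eq, sq_abs]; rfl
  have key : ∑ m : Fin 3, (psi k c y m - psi k c y' m) ^ 2 ≤ (2 * dist y y') ^ 2 := by
    rw [Fin.sum_univ_succAbove (fun m => (psi k c y m - psi k c y' m) ^ 2) k]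
    have hsame : psi k c y k - psi k c y' k = 0 := by
      simp [psi, Fin.insertNth_apply_same]
    have habove : ∀ i : Fin 2, psi k c y (k.succAbove i) - psi k c y' (k.succAbove i)
        = y i - y' i := by
      intro i; simp [psi, Fin.insertNth_apply_succAbove]
    rw [hsame]
    simp only [habove]
    have hb : ∀ i : Fin 2, (y i - y' i) ^ 2 ≤ dist y y' ^ 2 := by
      intro i
      have := dist_le_pi_dist y y' i
      rw [Real.dist_eq] at this
      calc (y i - y' i) ^ 2 = |y i - y' i| ^ 2 := (sq_abs _).symm
        _ ≤ dist y y' ^ 2 := by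
            apply pow_le_pow_left₀ (abs_nonneg _) this
    have : ∑ i : Fin 2, (y i - y' i) ^ 2 ≤ 2 * dist y y' ^ 2 := by
      rw [Fin.sum_univ_two]
      linarith [hb 0, hb 1]
    nlinarith [dist_nonneg (x := y) (y := y')]
  calc Real.sqrt (∑ m : Fin 3, dist (psi k c y m) (psi k c y' m) ^ 2)
      = Real.sqrt (∑ m : Fin 3, (psi k c y m - psi k c y' m) ^ 2) := by
        congr 1; exact Finset.sum_congr rfl fun m _ => by rw [Real.dist_eq, sq_abs]
    _ ≤ Real.sqrt ((2 * dist y y') ^ 2) := Real.sqrt_le_sqrt key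
    _ = 2 * dist y y' := Real.sqrt_sq (by positivity)
    _ = (2 : NNReal) * dist y y' := by norm_num

def phi (s : ℝ) (x : E3) : E3 := (s * ‖x‖⁻¹) • x

theorem phi_lipOn {s : ℝ} (hs : 0 < s) :
    LipschitzOnWith 2 (phi s) {x : E3 | s ≤ ‖x‖} := by
  rw [lipschitzOnWith_iff_dist_le_mul]
  intro x hx y hy
  simp only [Set.mem_setOf_eq] at hx hy
  have ha : (0:ℝ) < ‖x‖ := hs.trans_le hx
  have hb : (0:ℝ) < ‖y‖ := hs.trans_le hy
  rw [dist_eq_norm, dist_eq_norm]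
  have decomp : phi s x - phi s y
      = (s * ‖x‖⁻¹) • (x - y) + ((s * ‖x‖⁻¹) - (s * ‖y‖⁻¹)) • y := by
    simp only [phi, smul_sub, sub_smul]
    abel
  rw [decomp]
  have h2 : s * ‖x‖⁻¹ ≤ 1 := by
    rw [mul_inv_le_iff₀ ha, one_mul]; exact hx
  have haux : |s * ‖x‖⁻¹ - s * ‖y‖⁻¹| * ‖y‖ ≤ ‖x - y‖ := by
    have e1 : s * ‖x‖⁻¹ - s * ‖y‖⁻¹ = s * (‖y‖ - ‖x‖) * (‖x‖ * ‖y‖)⁻¹ := by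
      field_simp
    have e15 : |(‖x‖ * ‖y‖)⁻¹| = (‖x‖ * ‖y‖)⁻¹ :=
      abs_of_nonneg (inv_nonneg.2 (by positivity))
    rw [e1, abs_mul, abs_mul, abs_of_nonneg hs.le, e15]
    have e2 : s * |‖y‖ - ‖x‖| * (‖x‖ * ‖y‖)⁻¹ * ‖y‖ = s * ‖x‖⁻¹ * |‖y‖ - ‖x‖| := by
      field_simp
    rw [e2]
    have h1 : |‖y‖ - ‖x‖| ≤ ‖x - y‖ := by
      rw [norm_sub_rev x y]
      exact abs_norm_sub_norm_le y x
    calc s * ‖x‖⁻¹ * |‖y‖ - ‖x‖| ≤ 1 * ‖x - y‖ :=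
          mul_le_mul h2 h1 (abs_nonneg _) zero_le_one
      _ = ‖x - y‖ := one_mul _
  have hfirst : ‖(s * ‖x‖⁻¹) • (x - y)‖ ≤ ‖x - y‖ := by
    rw [norm_smul, Real.norm_eq_abs, abs_of_nonneg (by positivity)]
    calc s * ‖x‖⁻¹ * ‖x - y‖ ≤ 1 * ‖x - y‖ :=
          mul_le_mul h2 le_rfl (norm_nonneg _) zero_le_one
      _ = ‖x - y‖ := one_mul _
  have hsecond : ‖((s * ‖x‖⁻¹) - (s * ‖y‖⁻¹)) • y‖ ≤ ‖x - y‖ := by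
    rw [norm_smul, Real.norm_eq_abs]
    exact haux
  have htri := norm_add_le ((s * ‖x‖⁻¹) • (x - y)) (((s * ‖x‖⁻¹) - (s * ‖y‖⁻¹)) • y)
  push_cast
  linarith

def Q3 (s : ℝ) : Set (Fin 2 → ℝ) := Set.Icc (fun _ => -s) (fun _ => s)

theorem sphere_subset_cover {s : ℝ} (hs : 0 < s) :
    Metric.sphere (0:E3) s ⊆
      ⋃ (k : Fin 3) (σ : Bool), phi s '' (psi k (if σ then s else -s) '' Q3 s) := by
  intro y hy
  rw [mem_sphere_zero_iff_norm] at hy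
  have hy0 : y ≠ 0 := by
    intro h; rw [h, norm_zero] at hy; exact hs.ne' hy.symm
  obtain ⟨k, -, hk⟩ := Finset.exists_max_image Finset.univ (fun m => |y m|)
    ⟨0, Finset.mem_univ 0⟩
  have hk' : ∀ m, |y m| ≤ |y k| := fun m => hk m (Finset.mem_univ m)
  have hyk : y k ≠ 0 := by
    intro h
    apply hy0
    ext m
    have := hk' m
    rw [h, abs_zero] at this
    simpa using abs_nonpos_iff.mp this
  have hykpos : 0 < |y k| := abs_pos.2 hyk
  set c : ℝ := s / |y k| with hc
  have hc0 : 0 < c := div_pos hs hykpos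
  set z : E3 := c • y with hz
  have hzm : ∀ m, z m = c * y m := fun m => rfl
  have hzk : |z k| = s := by
    rw [hzm, abs_mul, abs_of_nonneg hc0.le, hc, div_mul_cancel₀ _ hykpos.ne']
  have hzb : ∀ m, |z m| ≤ s := by
    intro m
    rw [hzm, abs_mul, abs_of_nonneg hc0.le]
    calc c * |y m| ≤ c * |y k| := by
          exact mul_le_mul_of_nonneg_left (hk' m) hc0.le
      _ = s := by rw [hc, div_mul_cancel₀ _ hykpos.ne']
  have hznorm : ‖z‖ = c * s := by
    rw [hz, norm_smul, Real.norm_eq_abs, abs_of_nonneg hc0.le, hy]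
  have hphiz : phi s z = y := by
    rw [phi, hznorm, hz, smul_smul]
    have : s * (c * s)⁻¹ * c = 1 := by field_simp
    rw [this, one_smul]
  have hq : (fun i => z (k.succAbove i)) ∈ Q3 s := by
    constructor <;> intro i <;> have := abs_le.1 (hzb (k.succAbove i))
    · exact this.1
    · exact this.2
  have hins : ∀ c0, c0 = z k → psi k c0 (fun i => z (k.succAbove i)) = z := by
    intro c0 h
    ext m
    show Fin.insertNth (α := fun _ => ℝ) k c0 (fun i => z (k.succAbove i)) m = z m
    rw [h]
    exact congrFun (Fin.insertNth_self_removeNth k z) m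
  simp only [Set.mem_iUnion]
  by_cases hpos : 0 < y k
  · refine ⟨k, true, ?_⟩
    have hzks : z k = s := by
      have := hzk
      rwa [abs_of_pos (by rw [hzm]; positivity)] at this
    exact ⟨z, ⟨_, hq, by simpa using hins s hzks.symm⟩, hphiz⟩
  · refine ⟨k, false, ?_⟩
    have hneg : y k < 0 := lt_of_le_of_ne (not_lt.1 hpos) hyk
    have hzkneg : z k < 0 := by
      rw [hzm]
      exact mul_neg_of_pos_of_neg hc0 hneg
    have hzks : z k = -s := by
      have := hzk
      rw [abs_of_neg hzkneg] at this
      linarith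
    exact ⟨z, ⟨_, hq, by simpa using hins (-s) hzks.symm⟩, hphiz⟩

theorem hausdorff_pi2 : (μH[(2:ℝ)] : Measure (Fin 2 → ℝ)) = volume := by
  have := MeasureTheory.hausdorffMeasure_pi_real (ι := Fin 2)
  simpa using this

theorem hausdorff_sphere_lt_top {s : ℝ} (hs : 0 < s) :
    (μH[2] : Measure E3) (Metric.sphere (0:E3) s) < ⊤ := by
  have hQ : (μH[(2:ℝ)] : Measure (Fin 2 → ℝ)) (Q3 s) < ⊤ := by
    rw [hausdorff_pi2, Q3]
    exact (isCompact_Icc).measure_lt_top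
  have hterm : ∀ (k : Fin 3) (σ : Bool),
      (μH[2] : Measure E3) (phi s '' (psi k (if σ then s else -s) '' Q3 s)) < ⊤ := by
    intro k σ
    set c0 : ℝ := if σ then s else -s with hc0def
    have hc0 : |c0| = s := by
      cases σ <;> simp [hc0def, abs_of_pos hs, abs_of_neg (neg_neg_iff_pos.2 hs) ] <;>
        exact abs_of_pos hs
    have hsub : psi k c0 '' Q3 s ⊆ {x : E3 | s ≤ ‖x‖} := by
      rintro p ⟨q, -, rfl⟩
      have h1 : psi k c0 q k = c0 := by
        show Fin.insertNth (α := fun _ => ℝ) k c0 q k = c0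
        exact Fin.insertNth_apply_same (α := fun _ => ℝ) k c0 q
      have := abs_coord_le (psi k c0 q) k
      rw [h1, hc0] at this
      exact this
    have hT : (μH[2] : Measure E3) (psi k c0 '' Q3 s) < ⊤ := by
      refine lt_of_le_of_lt ((psi_lip k c0).hausdorffMeasure_image_le (by norm_num) (Q3 s)) ?_
      exact ENNReal.mul_lt_top (ENNReal.rpow_lt_top_of_nonneg (by norm_num)
        (by simp)) hQ
    refine lt_of_le_of_lt
      (((phi_lipOn hs).mono hsub).hausdorffMeasure_image_le (by norm_num)) ?_
    exact ENNReal.mul_lt_top (ENNReal.rpow_lt_top_of_nonneg (by norm_num) (by simp)) hT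
  refine lt_of_le_of_lt (measure_mono (sphere_subset_cover hs)) ?_
  refine lt_of_le_of_lt (measure_iUnion_le _) ?_
  rw [tsum_fintype]
  refine ENNReal.sum_lt_top.2 fun k _ => ?_
  refine lt_of_le_of_lt (measure_iUnion_le _) ?_
  rw [tsum_fintype]
  exact ENNReal.sum_lt_top.2 fun σ _ => hterm k σ

theorem pderiv_comm' {σ : Type*} {R : Type*} [CommRing R] (i j : σ) (f : MvPolynomial σ R) :
    pderiv i (pderiv j f) = pderiv j (pderiv i f) := by
  induction f using MvPolynomial.induction_on with
  | C a => simp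
  | add p q hp hq => simp [hp, hq]
  | mul_X p k hp =>
    simp only [pderiv_mul, map_add, pderiv_mul, hp]
    have hjk : pderiv i (pderiv j (X k) : MvPolynomial σ R) = 0 := by
      classical
      rcases eq_or_ne j k with rfl | h
      · simp [pderiv_X_self]
      · simp [pderiv_X_of_ne (Ne.symm h)]
    have hik : pderiv j (pderiv i (X k) : MvPolynomial σ R) = 0 := by
      classical
      rcases eq_or_ne i k with rfl | h
      · simp [pderiv_X_self]
      · simp [pderiv_X_of_ne (Ne.symm h)]
    rw [hjk, hik]
    ring

theorem pb_eq (f g : MvPolynomial (Fin 3) ℝ) :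
    pb f g = Lb 1 2 (f * pderiv 0 g) + Lb 2 0 (f * pderiv 1 g) + Lb 0 1 (f * pderiv 2 g) := by
  simp only [pb, Lb, pderiv_mul]
  rw [pderiv_comm' 2 0 g, pderiv_comm' 1 0 g, pderiv_comm' 2 1 g]
  ring

open Real Set

section Analysis

variable {s : ℝ}

theorem isFiniteMeasure_sphere (hs : 0 < s) :
    IsFiniteMeasure ((μH[2] : Measure E3).restrict (Metric.sphere (0:E3) s)) := by
  constructor
  rw [Measure.restrict_apply_univ]
  exact hausdorff_sphere_lt_top hs

theorem integrable_eval (hs : 0 < s) (p : MvPolynomial (Fin 3) ℝ) :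
    Integrable (fun x : E3 => eval (fun m => x m) p)
      ((μH[2] : Measure E3).restrict (Metric.sphere (0:E3) s)) := by
  haveI := isFiniteMeasure_sphere hs
  have hcont : Continuous (fun x : E3 => eval (fun m => x m) p) := by
    exact (MvPolynomial.continuous_eval p).comp (continuous_pi fun m => PiLp.continuous_apply 2 _ m)
  obtain ⟨C, hC⟩ := (isCompact_sphere (0:E3) s).exists_bound_of_continuousOn
    hcont.continuousOn
  refine Integrable.mono' (integrable_const C) hcont.aestronglyMeasurable ?_
  rw [ae_restrict_iff' Metric.isClosed_sphere.measurableSet]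
  exact Filter.Eventually.of_forall fun x hx => hC x hx

theorem integral_Lb (hs : 0 < s) (i j : Fin 3) (hij : i ≠ j) (q : MvPolynomial (Fin 3) ℝ) :
    ∫ x in Metric.sphere (0:E3) s, eval (fun m => x m) (Lb i j q)
      ∂(μH[2] : Measure E3) = 0 := by
  haveI := isFiniteMeasure_sphere hs
  set μ : Measure E3 := (μH[2] : Measure E3).restrict (Metric.sphere (0:E3) s) with hμ
  set ν : Measure ℝ := volume.restrict (Ioc (0:ℝ) (2*π)) with hν
  haveI : IsFiniteMeasure ν := by
    constructor
    rw [hν, Measure.restrict_apply_univ]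
    exact measure_Ioc_lt_top
  set P : MvPolynomial (Fin 3) ℝ := Lb i j q with hP
  set F : ℝ → E3 → ℝ := fun θ x => eval (fun m => rotFun i j θ x m) P with hF
  -- invariance
  have hinv : ∀ θ : ℝ, ∫ x, F θ x ∂μ = ∫ x, eval (fun m => x m) P ∂μ := by
    intro θ
    have := setIntegral_comp_LIE (rot i j hij θ) (rot_preimage_sphere i j hij θ s)
      (fun x => eval (fun m => x m) P)
    rw [hμ]
    rw [← this]
    rfl
  -- pointwise vanishing of the θ-integral
  have hpt : ∀ x : E3, ∫ θ in Ioc (0:ℝ) (2*π), F θ x = 0 := by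
    intro x
    have h2π : (0:ℝ) ≤ 2*π := by positivity
    rw [← intervalIntegral.integral_of_le h2π]
    have hderiv : ∀ θ ∈ Set.uIcc (0:ℝ) (2*π), HasDerivAt
        (fun t => eval (fun m => rotFun i j t x m) q) (F θ x) θ :=
      fun θ _ => hasDerivAt_eval_rotFun i j hij x q θ
    have hcont : Continuous (fun θ => F θ x) := by
      refine continuous_iff_continuousAt.2 fun θ => ?_
      exact (hasDerivAt_eval_rotFun i j hij x P θ).continuousAt
    rw [intervalIntegral.integral_eq_sub_of_hasDerivAt hderiv
      (hcont.intervalIntegrable _ _)]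
    have hrot : (fun m => rotFun i j (2*π) x m) = (fun m => rotFun i j 0 x m) := by
      funext m
      simp [rotFun, Real.cos_two_pi, Real.sin_two_pi]
    rw [hrot, sub_self]
  -- integrability on the product
  have hcont2 : Continuous (fun p : E3 × ℝ => F p.2 p.1) := by
    apply (MvPolynomial.continuous_eval P).comp
    apply continuous_pi
    intro m
    simp only [rotFun]
    by_cases hmi : m = i
    · simp only [if_pos hmi]
      exact ((Real.continuous_cos.comp continuous_snd).mul
        ((PiLp.continuous_apply 2 _ i).comp continuous_fst)).sub
        ((Real.continuous_sin.comp continuous_snd).mul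
        ((PiLp.continuous_apply 2 _ j).comp continuous_fst))
    · simp only [if_neg hmi]
      by_cases hmj : m = j
      · simp only [if_pos hmj]
        exact ((Real.continuous_sin.comp continuous_snd).mul
          ((PiLp.continuous_apply 2 _ i).comp continuous_fst)).add
          ((Real.continuous_cos.comp continuous_snd).mul
          ((PiLp.continuous_apply 2 _ j).comp continuous_fst))
      · simp only [if_neg hmj]
        exact (PiLp.continuous_apply 2 _ m).comp continuous_fst
  obtain ⟨C, hC⟩ := (isCompact_sphere (0:E3) s).exists_bound_of_continuousOn
    ((MvPolynomial.continuous_eval P).comp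
      (continuous_pi fun m => PiLp.continuous_apply 2 _ m)).continuousOn
  have hInt : Integrable (fun p : E3 × ℝ => F p.2 p.1) (μ.prod ν) := by
    refine Integrable.mono' (integrable_const C) hcont2.aestronglyMeasurable ?_
    have h0 : (μ.prod ν) ((Metric.sphere (0:E3) s)ᶜ ×ˢ (univ : Set ℝ)) = 0 := by
      rw [Measure.prod_prod]
      have hμ0 : μ ((Metric.sphere (0:E3) s)ᶜ) = 0 := by
        rw [hμ, Measure.restrict_apply Metric.isClosed_sphere.measurableSet.compl]
        simp
      rw [hμ0, zero_mul]
    have hae : ∀ᵐ p ∂(μ.prod ν), p.1 ∈ Metric.sphere (0:E3) s := by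
      rw [ae_iff]
      refine measure_mono_null ?_ h0
      intro p hp
      exact ⟨hp, trivial⟩
    filter_upwards [hae]
    rintro ⟨x, θ⟩ hx
    have hmem : rot i j hij θ x ∈ Metric.sphere (0:E3) s := by
      have := rot_preimage_sphere i j hij θ s
      rw [← this]
      simpa using hx
    have : F θ x = eval (fun m => (rot i j hij θ x) m) P := rfl
    rw [this]
    exact hC _ hmem
  have hswap := MeasureTheory.integral_integral_swap (μ := μ) (ν := ν)
    (f := fun x θ => F θ x) hInt
  have hlhs : ∫ x, ∫ θ, F θ x ∂ν ∂μ = 0 := by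
    rw [show (fun x => ∫ θ, F θ x ∂ν) = fun _ => (0:ℝ) from funext fun x => hpt x]
    simp
  have hrhs : ∫ θ, ∫ x, F θ x ∂μ ∂ν
      = (2*π) * ∫ x, eval (fun m => x m) P ∂μ := by
    rw [show (fun θ => ∫ x, F θ x ∂μ) = fun _ => ∫ x, eval (fun m => x m) P ∂μ from
      funext fun θ => hinv θ]
    rw [integral_const]
    rw [hν, measureReal_restrict_apply_univ, measureReal_def, Real.volume_Ioc]
    rw [smul_eq_mul]
    congr 1
    rw [ENNReal.toReal_ofReal (by nlinarith [Real.pi_pos])]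
    ring
  rw [hlhs, hrhs] at hswap
  have h2π : (2*π : ℝ) ≠ 0 := by positivity
  have := hswap.symm
  rcases mul_eq_zero.1 this with h | h
  · exact absurd h h2π
  · exact h

end Analysis

/-- The surface integral over the sphere of radius `s` of any Poisson bracket vanishes. -/
theorem integral_pb_eq_zero (s : ℝ) (hs : 0 < s) (f g : MvPolynomial (Fin 3) ℝ) :
    ∫ x in Metric.sphere (0 : EuclideanSpace ℝ (Fin 3)) s,
      MvPolynomial.eval (fun i => x i) (pb f g) ∂(μH[2]) = 0 := by
  haveI := isFiniteMeasure_sphere hs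
  have hint : ∀ p : MvPolynomial (Fin 3) ℝ,
      Integrable (fun x : E3 => eval (fun m => x m) p)
        ((μH[2] : Measure E3).restrict (Metric.sphere (0:E3) s)) := integrable_eval hs
  have : (fun x : E3 => eval (fun m => x m) (pb f g))
      = fun x : E3 => eval (fun m => x m) (Lb 1 2 (f * pderiv 0 g))
        + eval (fun m => x m) (Lb 2 0 (f * pderiv 1 g))
        + eval (fun m => x m) (Lb 0 1 (f * pderiv 2 g)) := by
    funext x
    rw [pb_eq f g]
    simp [map_add]
  calc ∫ x in Metric.sphere (0 : E3) s, eval (fun i => x i) (pb f g) ∂(μH[2] : Measure E3)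
      = ∫ x in Metric.sphere (0 : E3) s,
        (eval (fun m => x m) (Lb 1 2 (f * pderiv 0 g))
        + eval (fun m => x m) (Lb 2 0 (f * pderiv 1 g))
        + eval (fun m => x m) (Lb 0 1 (f * pderiv 2 g))) ∂(μH[2] : Measure E3) := by
        rw [show (fun x : E3 => eval (fun i => x i) (pb f g))
          = _ from this]
    _ = 0 := by
        rw [MeasureTheory.integral_add
            (f := fun x : E3 => eval (fun m => x m) (Lb 1 2 (f * pderiv 0 g))
              + eval (fun m => x m) (Lb 2 0 (f * pderiv 1 g)))
            (g := fun x : E3 => eval (fun m => x m) (Lb 0 1 (f * pderiv 2 g)))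
            ((hint _).add (hint _)) (hint _),
          MeasureTheory.integral_add (hint _) (hint _)]
        rw [integral_Lb hs 1 2 (by decide) (f * pderiv 0 g),
          integral_Lb hs 2 0 (by decide) (f * pderiv 1 g),
          integral_Lb hs 0 1 (by decide) (f * pderiv 2 g)]
        ring

end
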